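/- Let τ > 0 and let ν : I_N × I_N → ℝ be nonnegative with zero diagonal and with ν_{i,j} = 0 for every (i,j) not of the form (k,k+1), (k+1,k), or (N,k) with 0 ≤ k ≤ N−1. Suppose that: (G1') for every k ∈ I_N, ∑_{i∈I_N} ν_{i,k} − ∑_{j∈I_N} ν_{k,j} = 1 if k = N, = −1 if k = 0, and = 0 otherwise; and (G2') the symmetric matrix (𝐒 + 𝐒ᵀ)/2 is positive semidefinite, where 𝐒 = Aᵀ·H̃^{−A} + (κ/(2(1−κ)))·B + (1/2)·h_0h_0ᵀ − (L/(2τ))·h_Nh_Nᵀ. Then for all families {y_i}_{i∈I_N}, {g_i}_{i∈I_N} in ℝ^d and {f_i}_{i∈I_N} in ℝ with y_0,…,y_N generated by the algorithm H^A from g_0,…,g_{N−1}, one has (1/(2τ) − 1/(2L))‖g_N‖² − f_0 + f_N ≤ ∑_{i,j∈I_N} ν_{i,j}·Φ_{i,j} (with p_i = y_i). -/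

import Mathlib

open Finset
open scoped RealInnerProductSpace Matrix

noncomputable section

/-- `ℝ^d` with the Euclidean structure. -/
abbrev Vec (d : ℕ) := EuclideanSpace ℝ (Fin d)

/-- The index set `I_N^* = {0, …, N} ∪ {*}`; `some k` is the numeric index `k`,
`none` is the index `*`. -/
abbrev Idx (N : ℕ) := Option (Fin (N + 1))

/-- The interpolation-inequality quantity
`Φ_{i,j} = f_j − f_i + ⟪g_j, p_i − p_j⟫ + (1/(2L))‖g_i − g_j‖²
  + (μL/(2(L−μ)))‖p_i − p_j − (1/L)(g_i − g_j)‖²`. -/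
def Phi {d : ℕ} {ι : Type*} (L μ : ℝ) (p g : ι → Vec d) (f : ι → ℝ) (i j : ι) : ℝ :=
  f j - f i + ⟪g j, p i - p j⟫ + 1 / (2 * L) * ‖g i - g j‖ ^ 2
    + μ * L / (2 * (L - μ)) * ‖p i - p j - (1 / L) • (g i - g j)‖ ^ 2

/-- `x_0, …, x_N` are generated by the algorithm given by the `N × N` matrix `M` from
`g_0, …, g_{N−1}`: `x_{k+1} − x_k = −(1/L) ∑_{j=0}^{k} M_{k+1,j+1} g_j` (1-indexed matrix
entries). -/
def GenBy {d N : ℕ} (L : ℝ) (M : Matrix (Fin N) (Fin N) ℝ)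
    (x g : Fin (N + 1) → Vec d) : Prop :=
  ∀ k : Fin N, x k.succ - x k.castSucc =
    -(1 / L) • ∑ j : Fin N, (if (j : ℕ) ≤ (k : ℕ) then M k j • g j.castSucc else 0)

/-- Anti-diagonal transpose of a square matrix: `(Mᴬ)_{i,j} = M_{n+1−j, n+1−i}`. -/
def antiT {n : ℕ} (M : Matrix (Fin n) (Fin n) ℝ) : Matrix (Fin n) (Fin n) ℝ :=
  fun i j => M j.rev i.rev

/-- The `(N+1) × (N+1)` matrix `H̃` associated with the `N × N` lower-triangular matrix
`H`: `H̃_{1,1} = 1` and, for `2 ≤ i ≤ N+1`, `H̃_{i,j} = H_{i−1,j}` for `j ≤ i−2`,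
`H̃_{i,i−1} = H_{i−1,i−1} − 1`, `H̃_{i,i} = 1` (1-indexed). -/
def Htilde {N : ℕ} (H : Matrix (Fin N) (Fin N) ℝ) :
    Matrix (Fin (N + 1)) (Fin (N + 1)) ℝ :=
  fun i j =>
    if (i : ℕ) = (j : ℕ) then 1
    else if h2 : (j : ℕ) + 1 = (i : ℕ) then
      H ⟨(j : ℕ), by have := i.isLt; omega⟩ ⟨(j : ℕ), by have := i.isLt; omega⟩ - 1
    else if h3 : (j : ℕ) + 1 < (i : ℕ) then
      H ⟨(i : ℕ) - 1, by have := i.isLt; omega⟩ ⟨(j : ℕ), by have := i.isLt; omega⟩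
    else 0

/-- The tuple of consecutive differences `(p_0^+ − base, p_1^+ − p_0^+, …, p_N^+ − p_{N−1}^+)`
built from a base point and the numeric entries of `p : I_N^* → ℝ^d`. -/
def dvec {d N : ℕ} (base : Vec d) (p : Idx N → Vec d) : Fin (N + 1) → Vec d :=
  fun i =>
    if (i : ℕ) = 0 then p (some 0) - base
    else p (some i) - p (some ⟨(i : ℕ) - 1, by have := i.isLt; omega⟩)

/-- The quantity `S` of the dual PEP analysis:
`S = −L⟪H̃⁻¹x, Ty⟫ + (L/2)‖y_0 − (y_0^+ + y_*^+)/2 − (x_N^+ − x_*^+)/2‖²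
 − (μL/(L−μ))[∑_{k=1}^{N} ⟪y_k^+ − y_{k−1}^+, x_{N−k}^+⟫ + ⟪(y_0^+ + y_*^+)/2 − y_N^+, x_*^+⟫
 + ⟪(y_0^+ − y_*^+)/2, x_N^+⟫]`. -/
def Squant {d N : ℕ} (L μ : ℝ) (H : Matrix (Fin N) (Fin N) ℝ)
    (x0 y0 : Vec d) (xp yp : Idx N → Vec d) : ℝ :=
  -L * (∑ i : Fin (N + 1),
      ⟪∑ j : Fin (N + 1), (Htilde H)⁻¹ i j • dvec x0 xp j, dvec y0 yp i.rev⟫)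
  + L / 2 * ‖y0 - (1 / 2 : ℝ) • (yp (some 0) + yp none)
      - (1 / 2 : ℝ) • (xp (some (Fin.last N)) - xp none)‖ ^ 2
  - μ * L / (L - μ) *
      ((∑ k : Fin N, ⟪yp (some k.succ) - yp (some k.castSucc), xp (some k.rev.castSucc)⟫)
        + ⟪(1 / 2 : ℝ) • (yp (some 0) + yp none) - yp (some (Fin.last N)), xp none⟫
        + ⟪(1 / 2 : ℝ) • (yp (some 0) - yp none), xp (some (Fin.last N))⟫)

/-- Condition `(X_λ)`:
`y_k^+ − y_{k−1}^+ = ∑_{i∈I_N^*} λ_{i,N−k}(x_i^+ − x_{N−k}^+)` for `k = 1, …, N`, and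
`(y_0^+ + y_*^+)/2 − y_N^+ = (x_N^+ − x_*^+)/2 + ∑_{i∈I_N^*} λ_{i,*}(x_i^+ − x_*^+)`. -/
def CondX {d N : ℕ} (lam : Idx N → Idx N → ℝ) (xp yp : Idx N → Vec d) : Prop :=
  (∀ k : Fin N, yp (some k.succ) - yp (some k.castSucc) =
      ∑ i : Idx N, lam i (some k.rev.castSucc) • (xp i - xp (some k.rev.castSucc))) ∧
  (1 / 2 : ℝ) • (yp (some 0) + yp none) - yp (some (Fin.last N)) =
      (1 / 2 : ℝ) • (xp (some (Fin.last N)) - xp none)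
        + ∑ i : Idx N, lam i none • (xp i - xp none)

/-- Condition `(Y_ν)`:
`x_k^+ − x_{k−1}^+ = ∑_{i∈I_N^*} ν_{i,N−k}(y_i^+ − y_{N−k}^+)` for `k = 1, …, N−1`,
`x_0^+ − x_*^+ = ∑_{i∈I_N^*} ν_{i,N}(y_i^+ − y_N^+)`, and
`(x_*^+ − x_N^+)/2 = (y_*^+ − y_0^+)/2 + ∑_{i∈I_N^*} ν_{i,*}(y_i^+ − y_*^+)`. -/
def CondY {d N : ℕ} (nu : Idx N → Idx N → ℝ) (xp yp : Idx N → Vec d) : Prop :=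
  (∀ k : Fin N, (k : ℕ) + 1 < N →
      xp (some k.succ) - xp (some k.castSucc) =
        ∑ i : Idx N, nu i (some k.rev.castSucc) • (yp i - yp (some k.rev.castSucc))) ∧
  (xp (some 0) - xp none =
      ∑ i : Idx N, nu i (some (Fin.last N)) • (yp i - yp (some (Fin.last N)))) ∧
  (1 / 2 : ℝ) • (xp none - xp (some (Fin.last N))) =
      (1 / 2 : ℝ) • (yp none - yp (some 0)) + ∑ i : Idx N, nu i none • (yp i - yp none)

/-- `(F1)`: `∑_i λ_{i,k} − ∑_j λ_{k,j}` equals `1` for `k = N`, `−1` for `k = *`, and `0`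
otherwise. -/
def CondF1 {N : ℕ} (lam : Idx N → Idx N → ℝ) : Prop :=
  ∀ k : Idx N, (∑ i : Idx N, lam i k) - ∑ j : Idx N, lam k j =
    if k = some (Fin.last N) then 1 else if k = none then -1 else 0

/-- `(G1)`: `∑_i ν_{i,k} − ∑_j ν_{k,j}` equals `1` for `k = *`, `−1` for `k = 0`, and `0`
otherwise. -/
def CondG1 {N : ℕ} (nu : Idx N → Idx N → ℝ) : Prop :=
  ∀ k : Idx N, (∑ i : Idx N, nu i k) - ∑ j : Idx N, nu k j =
    if k = none then 1 else if k = some 0 then -1 else 0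

/-- The sparsity pattern `(relaxed-f)`: the allowed pairs `(k, k+1)` for `0 ≤ k ≤ N−1` and
`(*, k)` for `0 ≤ k ≤ N`. -/
def RelF (N : ℕ) (i j : Idx N) : Prop :=
  (∃ k : Fin N, i = some k.castSucc ∧ j = some k.succ) ∨
  (∃ k : Fin (N + 1), i = none ∧ j = some k)

/-- The sparsity pattern `(relaxed-g)`: the allowed pairs `(k, k+1)` and `(N, k)` for
`0 ≤ k ≤ N−1` and `(N, *)`. -/
def RelG (N : ℕ) (i j : Idx N) : Prop :=
  (∃ k : Fin N, i = some k.castSucc ∧ j = some k.succ) ∨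
  (∃ k : Fin N, i = some (Fin.last N) ∧ j = some k.castSucc) ∨
  (i = some (Fin.last N) ∧ j = none)

/-- The sparsity pattern `(d1-tau)`: the allowed pairs `(k, k+1)`, `(k+1, k)`, `(N, k)` for
`0 ≤ k ≤ N−1` and `(N, *)`. -/
def RelD (N : ℕ) (i j : Idx N) : Prop :=
  (∃ k : Fin N, i = some k.castSucc ∧ j = some k.succ) ∨
  (∃ k : Fin N, i = some k.succ ∧ j = some k.castSucc) ∨
  (∃ k : Fin N, i = some (Fin.last N) ∧ j = some k.castSucc) ∨
  (i = some (Fin.last N) ∧ j = none)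

end

/-- The `(N+1) × (N+1)` matrix `A` of the semidefinite reformulation, built from the
multipliers `ν` on `I_N × I_N` (0-indexed): `A_{i,i} = a_i = ν_{i−1,i}` for `i ≥ 1`,
`A_{i,i+1} = b_i` where `b_i = −ν_{i+1,i} − ν_{N,i}` for `i ≤ N−2` and
`b_{N−1} = −ν_{N,N−1}`, `A_{i,j} = c_i = −ν_{N,i}` for `j ≥ i+2`, and `0` otherwise. -/
noncomputable def matA {N : ℕ} (nu : Fin (N + 1) → Fin (N + 1) → ℝ) :
    Matrix (Fin (N + 1)) (Fin (N + 1)) ℝ :=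
  fun i j =>
    if (i : ℕ) = (j : ℕ) ∧ 1 ≤ (i : ℕ) then
      nu ⟨(i : ℕ) - 1, by have := i.isLt; omega⟩ i
    else if (j : ℕ) = (i : ℕ) + 1 then
      (if (i : ℕ) = N - 1 then -nu (Fin.last N) i else -nu j i - nu (Fin.last N) i)
    else if (i : ℕ) + 2 ≤ (j : ℕ) then -nu (Fin.last N) i
    else 0

/-- The `(N+1) × (N+1)` matrix `B` of the semidefinite reformulation, built from the
multipliers `ν` on `I_N × I_N` (0-indexed): the first row and column vanish,
`B_{i,i} = d_i` where `d_i = ν_{i−1,i} + ν_{i,i−1} + ∑_{l<i} ν_{N,l}` for `1 ≤ i ≤ N−1`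
and `d_N = ν_{N−1,N} + ∑_{l<N} ν_{N,l}`, and `B_{i,j} = e_{min(i,j)} = ∑_{l<min(i,j)}
ν_{N,l}` for distinct nonzero `i, j`. -/
noncomputable def matB {N : ℕ} (nu : Fin (N + 1) → Fin (N + 1) → ℝ) :
    Matrix (Fin (N + 1)) (Fin (N + 1)) ℝ :=
  fun i j =>
    if (i : ℕ) = 0 ∨ (j : ℕ) = 0 then 0
    else if (i : ℕ) = (j : ℕ) then
      (if (i : ℕ) = N then
          nu ⟨N - 1, by omega⟩ (Fin.last N)
            + ∑ l : Fin (N + 1), (if (l : ℕ) < N then nu (Fin.last N) l else 0)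
        else
          nu ⟨(i : ℕ) - 1, by have := i.isLt; omega⟩ i
            + nu i ⟨(i : ℕ) - 1, by have := i.isLt; omega⟩
            + ∑ l : Fin (N + 1), (if (l : ℕ) < (i : ℕ) then nu (Fin.last N) l else 0))
    else ∑ l : Fin (N + 1), (if (l : ℕ) < min (i : ℕ) (j : ℕ) then nu (Fin.last N) l else 0)

/-- The PEP matrix `𝐒 = Aᵀ H̃^{−A} + (κ/(2(1−κ))) B + (1/2) h₀h₀ᵀ − (L/(2τ)) h_N h_Nᵀ`,
where `κ = μ/L`, `H̃^{−A}` is the anti-transpose of `H̃⁻¹`, and `h₀`, `h_N` are the first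
and last rows of `H̃^{−A}`. -/
noncomputable def Smat {N : ℕ} (L μ τ : ℝ) (H : Matrix (Fin N) (Fin N) ℝ)
    (nu : Fin (N + 1) → Fin (N + 1) → ℝ) : Matrix (Fin (N + 1)) (Fin (N + 1)) ℝ :=
  (matA nu)ᵀ * antiT ((Htilde H)⁻¹)
    + ((μ / L) / (2 * (1 - μ / L))) • matB nu
    + (1 / 2 : ℝ) • Matrix.vecMulVec (fun j => antiT ((Htilde H)⁻¹) 0 j)
        (fun j => antiT ((Htilde H)⁻¹) 0 j)
    - (L / (2 * τ)) • Matrix.vecMulVec (fun j => antiT ((Htilde H)⁻¹) (Fin.last N) j)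
        (fun j => antiT ((Htilde H)⁻¹) (Fin.last N) j)

section AuxPEP

open Matrix

variable {d N : ℕ}

private lemma htilde_lt {H : Matrix (Fin N) (Fin N) ℝ} {i j : Fin (N+1)}
    (h : (i : ℕ) < (j : ℕ)) : Htilde H i j = 0 := by
  unfold Htilde
  rw [if_neg (by omega), dif_neg (by omega), dif_neg (by omega)]

private lemma htilde_mul_inv (H : Matrix (Fin N) (Fin N) ℝ) :
    Htilde H * (Htilde H)⁻¹ = 1 := by
  apply Matrix.mul_nonsing_inv
  have hdet : (Htilde H).det = 1 := by
    rw [Matrix.det_of_lowerTriangular (Htilde H)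
      (fun i j h => htilde_lt (by simpa using h))]
    have : ∀ i : Fin (N+1), Htilde H i i = 1 := by
      intro i; unfold Htilde; rw [if_pos rfl]
    rw [Finset.prod_congr rfl (fun i _ => this i), Finset.prod_const_one]
  rw [hdet]; exact isUnit_one

private lemma gram_nonneg {n : ℕ} (S : Matrix (Fin n) (Fin n) ℝ)
    (h : ((1 / 2 : ℝ) • (S + Sᵀ)).PosSemidef) (u : Fin n → Vec d) :
    0 ≤ ∑ a, ∑ b, S a b * ⟪u a, u b⟫ := by
  have key : ∀ x : Fin n → ℝ, 0 ≤ ∑ a, ∑ b, S a b * (x a * x b) := by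
    intro x
    have h2 := h.dotProduct_mulVec_nonneg x
    have e1 : dotProduct (star x) (((1 / 2 : ℝ) • (S + Sᵀ)).mulVec x)
        = ∑ a, ∑ b, (1 / 2 : ℝ) * ((S a b + S b a) * (x a * x b)) := by
      simp only [dotProduct, Matrix.mulVec, Matrix.smul_apply, Matrix.add_apply,
        Matrix.transpose_apply, smul_eq_mul, Pi.star_apply, star_trivial, Finset.mul_sum]
      exact Finset.sum_congr rfl fun a _ => Finset.sum_congr rfl fun b _ => by ring
    have e2 : ∑ a, ∑ b, (1 / 2 : ℝ) * ((S a b + S b a) * (x a * x b))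
        = ∑ a, ∑ b, S a b * (x a * x b) := by
      have e3 : ∑ a, ∑ b, S b a * (x a * x b) = ∑ a, ∑ b, S a b * (x a * x b) := by
        rw [Finset.sum_comm]
        exact Finset.sum_congr rfl fun a _ => Finset.sum_congr rfl fun b _ => by ring
      have e4 : ∑ a, ∑ b, (1 / 2 : ℝ) * ((S a b + S b a) * (x a * x b))
          = ∑ a, ∑ b, ((1 / 2 : ℝ) * (S a b * (x a * x b))
              + (1 / 2 : ℝ) * (S b a * (x a * x b))) := by
        exact Finset.sum_congr rfl fun a _ => Finset.sum_congr rfl fun b _ => by ring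
      rw [e4]
      simp only [Finset.sum_add_distrib, ← Finset.mul_sum]
      rw [e3]; ring
    rw [e1, e2] at h2; exact h2
  have expand : ∑ a, ∑ b, S a b * ⟪u a, u b⟫
      = ∑ t : Fin d, ∑ a, ∑ b, S a b * (u a t * u b t) := by
    have e5 : ∀ a b : Fin n, S a b * ⟪u a, u b⟫ = ∑ t : Fin d, S a b * (u a t * u b t) := by
      intro a b
      have : ⟪u a, u b⟫ = ∑ t : Fin d, u a t * u b t := by
        simp [PiLp.inner_apply, RCLike.inner_apply]
        exact Finset.sum_congr rfl fun _ _ => mul_comm _ _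
      rw [this, Finset.mul_sum]
    calc ∑ a, ∑ b, S a b * ⟪u a, u b⟫
        = ∑ a, ∑ t : Fin d, ∑ b, S a b * (u a t * u b t) := by
          refine Finset.sum_congr rfl fun a _ => ?_
          rw [Finset.sum_congr rfl fun b _ => e5 a b, Finset.sum_comm]
      _ = ∑ t : Fin d, ∑ a, ∑ b, S a b * (u a t * u b t) := Finset.sum_comm
  rw [expand]
  exact Finset.sum_nonneg fun t _ => key fun a => u a t

private lemma tele (Z : ℕ → Vec d) (m : ℕ) (h1 : 1 ≤ m) (h2 : m ≤ N + 1) :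
    ∑ b : Fin (N + 1), (if m ≤ (b : ℕ) then Z ((b : ℕ) - 1) - Z (b : ℕ) else 0)
      = Z (m - 1) - Z N := by
  rw [Fin.sum_univ_eq_sum_range (fun t => if m ≤ t then Z (t - 1) - Z t else 0) (N + 1)]
  rw [← Finset.sum_filter]
  have hf : Finset.filter (fun t => m ≤ t) (Finset.range (N + 1)) = Finset.Ico m (N + 1) := by
    ext t; simp [Finset.mem_filter, Finset.mem_range, Finset.mem_Ico]; omega
  rw [hf, Finset.sum_Ico_eq_sum_range]
  have : ∀ k ∈ Finset.range (N + 1 - m), Z (m + k - 1) - Z (m + k)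
      = (fun i => Z (m - 1 + i)) k - (fun i => Z (m - 1 + i)) (k + 1) := by
    intro k _
    have e1 : m + k - 1 = m - 1 + k := by omega
    have e2 : m + k = m - 1 + (k + 1) := by omega
    rw [e1, e2]
  rw [Finset.sum_congr rfl this, Finset.sum_range_sub' (fun i => Z (m - 1 + i))]
  have e3 : m - 1 + 0 = m - 1 := by omega
  have e4 : m - 1 + (N + 1 - m) = N := by omega
  rw [e3, e4]

end AuxPEP
section AuxPEP2

open Matrix

variable {d N : ℕ}

private lemma H_congr (H : Matrix (Fin N) (Fin N) ℝ) {v1 v2 w1 w2 : ℕ}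
    {p1 : v1 < N} {p2 : v2 < N} {q1 : w1 < N} {q2 : w2 < N}
    (h : v1 = v2) (h' : w1 = w2) : H ⟨v1, p1⟩ ⟨w1, q1⟩ = H ⟨v2, p2⟩ ⟨w2, q2⟩ := by
  subst h; subst h'; rfl

private lemma htilde_diag (H : Matrix (Fin N) (Fin N) ℝ) (i j : Fin (N+1))
    (h : (i : ℕ) = (j : ℕ)) : Htilde H i j = 1 := by
  unfold Htilde; rw [if_pos h]

private lemma htilde_sub (H : Matrix (Fin N) (Fin N) ℝ) (i j : Fin (N+1))
    (h : (j : ℕ) + 1 = (i : ℕ)) (hj : (j : ℕ) < N) :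
    Htilde H i j = H ⟨(j : ℕ), hj⟩ ⟨(j : ℕ), hj⟩ - 1 := by
  unfold Htilde; rw [if_neg (by omega), dif_pos h]

private lemma htilde_low (H : Matrix (Fin N) (Fin N) ℝ) (i j : Fin (N+1))
    (h : (j : ℕ) + 1 < (i : ℕ)) (h1 : (i : ℕ) - 1 < N) (h2 : (j : ℕ) < N) :
    Htilde H i j = H ⟨(i : ℕ) - 1, h1⟩ ⟨(j : ℕ), h2⟩ := by
  unfold Htilde; rw [if_neg (by omega), dif_neg (by omega), dif_pos h]

private lemma sum_single_nat {M : Type*} [AddCommMonoid M] {n : ℕ} (v : ℕ) (hv : v < n)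
    (P : ℕ → Prop) [DecidablePred P] (hP : ∀ t, t < n → (P t ↔ t = v)) (F : Fin n → M) :
    ∑ b : Fin n, (if P (b : ℕ) then F b else 0) = F ⟨v, hv⟩ := by
  rw [Finset.sum_eq_single (⟨v, hv⟩ : Fin n)]
  · rw [if_pos ((hP v hv).mpr rfl)]
  · intro b _ hb
    rw [if_neg (fun hp => hb (Fin.ext ((hP _ b.isLt).mp hp)))]
  · intro h; exact absurd (Finset.mem_univ _) h

private lemma sum_zero_nat {M : Type*} [AddCommMonoid M] {n : ℕ}
    (P : ℕ → Prop) [DecidablePred P] (hP : ∀ t, t < n → ¬ P t) (F : Fin n → M) :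
    ∑ b : Fin n, (if P (b : ℕ) then F b else 0) = 0 :=
  Finset.sum_eq_zero fun b _ => if_neg (hP _ b.isLt)

set_option maxHeartbeats 1000000 in
private lemma v_eq {L : ℝ} (hL : L ≠ 0) {H : Matrix (Fin N) (Fin N) ℝ}
    {y g : Fin (N + 1) → Vec d} (hgen : GenBy L (antiT H) y g) (a : Fin (N + 1)) :
    ∑ b : Fin (N + 1), Htilde H b.rev a.rev • g b =
      if (a : ℕ) = 0 then g 0
      else (L • y ⟨(a : ℕ) - 1, by have := a.isLt; omega⟩
              - g ⟨(a : ℕ) - 1, by have := a.isLt; omega⟩) - (L • y a - g a) := by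
  by_cases h0 : (a : ℕ) = 0
  · rw [if_pos h0]
    have ha : a = 0 := Fin.ext (by simpa using h0)
    subst ha
    rw [Finset.sum_eq_single (0 : Fin (N + 1))]
    · rw [htilde_diag H _ _ rfl, one_smul]
    · intro b _ hb
      have hbv : (b : ℕ) ≠ 0 := fun hh => hb (Fin.ext (by simpa using hh))
      have h1 : (b.rev : ℕ) < ((0 : Fin (N+1)).rev : ℕ) := by
        rw [Fin.val_rev, Fin.val_rev]
        have := b.isLt; simp; omega
      rw [htilde_lt h1, zero_smul]
    · intro h; exact absurd (Finset.mem_univ _) h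
  · rw [if_neg h0]
    have ha1 : 1 ≤ (a : ℕ) := by omega
    have haN : (a : ℕ) ≤ N := by have := a.isLt; omega
    have hcN : N - (a : ℕ) < N := by omega
    set c : ℕ := N - (a : ℕ) with hcdef
    set F : ℕ → Vec d := fun t =>
      if ht : t < N ∧ t + 2 ≤ (a : ℕ) then
        H ⟨N - 1 - t, by omega⟩ ⟨c, hcN⟩ • g ⟨t, by omega⟩ else 0 with hF
    have hreva : (a.rev : ℕ) = c := by rw [Fin.val_rev]; omega
    have hdec : ∀ b : Fin (N + 1), Htilde H b.rev a.rev • g b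
        = ((if (b : ℕ) = (a : ℕ) then g b else 0)
          + (if (b : ℕ) + 1 = (a : ℕ) then (H ⟨c, hcN⟩ ⟨c, hcN⟩ - 1) • g b else 0))
          + (if (b : ℕ) + 2 ≤ (a : ℕ) then Htilde H b.rev a.rev • g b else 0) := by
      intro b
      have hbN : (b : ℕ) < N + 1 := b.isLt
      have hrevb : (b.rev : ℕ) = N - (b : ℕ) := by rw [Fin.val_rev]; omega
      by_cases hb1 : (b : ℕ) = (a : ℕ)
      · rw [if_pos hb1, if_neg (by omega), if_neg (by omega),
          htilde_diag H _ _ (by omega), one_smul, add_zero, add_zero]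
      · by_cases hb2 : (b : ℕ) + 1 = (a : ℕ)
        · rw [if_neg hb1, if_pos hb2, if_neg (by omega), zero_add, add_zero,
            htilde_sub H _ _ (by omega) (by omega)]
          exact congrArg (fun r => (r - 1) • g b) (H_congr H (by omega) (by omega))
        · by_cases hb3 : (b : ℕ) + 2 ≤ (a : ℕ)
          · rw [if_neg hb1, if_neg hb2, if_pos hb3, zero_add, zero_add]
          · rw [if_neg hb1, if_neg hb2, if_neg hb3, add_zero, add_zero]
            rw [htilde_lt (show (b.rev : ℕ) < (a.rev : ℕ) by omega), zero_smul]
    rw [Finset.sum_congr rfl (fun b _ => hdec b), Finset.sum_add_distrib,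
      Finset.sum_add_distrib]
    have heta : (⟨(a : ℕ), a.isLt⟩ : Fin (N + 1)) = a := Fin.eta a a.isLt
    have hS1 := sum_single_nat (n := N + 1) (a : ℕ) a.isLt (fun t => t = (a : ℕ))
      (fun t _ => Iff.rfl) g
    rw [heta] at hS1
    have hS2 := sum_single_nat (n := N + 1) ((a : ℕ) - 1) (show (a : ℕ) - 1 < N + 1 by omega)
      (fun t => t + 1 = (a : ℕ)) (fun t _ => by omega)
      (fun b => (H ⟨c, hcN⟩ ⟨c, hcN⟩ - 1) • g b)
    have hS3 : ∑ b : Fin (N + 1), (if (b : ℕ) + 2 ≤ (a : ℕ) then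
          Htilde H b.rev a.rev • g b else 0) = ∑ t ∈ Finset.range N, F t := by
      have hpt : ∀ b : Fin (N + 1), (if (b : ℕ) + 2 ≤ (a : ℕ) then
          Htilde H b.rev a.rev • g b else 0) = F (b : ℕ) := by
        intro b
        have hbN : (b : ℕ) < N + 1 := b.isLt
        have hrevb : (b.rev : ℕ) = N - (b : ℕ) := by rw [Fin.val_rev]; omega
        by_cases hb3 : (b : ℕ) + 2 ≤ (a : ℕ)
        · rw [if_pos hb3, hF]
          simp only []
          rw [dif_pos (show (b : ℕ) < N ∧ (b : ℕ) + 2 ≤ (a : ℕ) by omega),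
            htilde_low H _ _ (by omega) (by omega) (by omega)]
          have hgb : g b = g ⟨(b : ℕ), by omega⟩ := rfl
          rw [hgb]
          exact congrArg₂ (fun r (w : Vec d) => r • w)
            (H_congr H (by omega) (by omega)) rfl
        · rw [if_neg hb3, hF]; simp only []
          rw [dif_neg (by omega)]
      rw [Finset.sum_congr rfl (fun b _ => hpt b),
        Fin.sum_univ_eq_sum_range F (N + 1), Finset.sum_range_succ]
      have hFN : F N = 0 := by rw [hF]; simp only []; rw [dif_neg (by omega)]
      rw [hFN, add_zero]
    rw [hS1, hS2, hS3]
    -- now use GenBy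
    have hk : (a : ℕ) - 1 < N := by omega
    have hgen' := hgen ⟨(a : ℕ) - 1, hk⟩
    have hks : (⟨(a : ℕ) - 1, hk⟩ : Fin N).succ = a := Fin.ext (by simp [Fin.val_succ]; omega)
    have hkc : (⟨(a : ℕ) - 1, hk⟩ : Fin N).castSucc
        = (⟨(a : ℕ) - 1, by omega⟩ : Fin (N + 1)) := Fin.ext (by simp)
    have hkv : ((⟨(a : ℕ) - 1, hk⟩ : Fin N) : ℕ) = (a : ℕ) - 1 := rfl
    rw [hks, hkc] at hgen'
    simp only [hkv] at hgen'
    have hSsum : L • (y ⟨(a : ℕ) - 1, by omega⟩ - y a)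
        = ∑ j : Fin N, (if (j : ℕ) ≤ (a : ℕ) - 1 then
            antiT H ⟨(a : ℕ) - 1, hk⟩ j • g j.castSucc else 0) := by
      rw [← neg_sub (y a), hgen', neg_smul, neg_neg, smul_smul,
        mul_one_div_cancel hL, one_smul]
    have hsplit : ∀ j : Fin N, (if (j : ℕ) ≤ (a : ℕ) - 1 then
            antiT H ⟨(a : ℕ) - 1, hk⟩ j • g j.castSucc else 0)
        = (if (j : ℕ) + 1 = (a : ℕ) then
             antiT H ⟨(a : ℕ) - 1, hk⟩ j • g j.castSucc else 0) + F (j : ℕ) := by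
      intro j
      have hjN : (j : ℕ) < N := j.isLt
      have hrevj : (j.rev : ℕ) = N - 1 - (j : ℕ) := by rw [Fin.val_rev]; omega
      have hrevk : ((⟨(a : ℕ) - 1, hk⟩ : Fin N).rev : ℕ) = c := by
        rw [Fin.val_rev, hkv]; omega
      by_cases hj1 : (j : ℕ) + 1 = (a : ℕ)
      · rw [if_pos (by omega), if_pos hj1, hF]; simp only []
        rw [dif_neg (by omega), add_zero]
      · by_cases hj2 : (j : ℕ) + 2 ≤ (a : ℕ)
        · rw [if_pos (by omega), if_neg hj1, zero_add, hF]; simp only []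
          rw [dif_pos (show (j : ℕ) < N ∧ (j : ℕ) + 2 ≤ (a : ℕ) by omega)]
          have hgj : g j.castSucc = g ⟨(j : ℕ), by omega⟩ := rfl
          have haT : antiT H ⟨(a : ℕ) - 1, hk⟩ j
              = H j.rev (⟨(a : ℕ) - 1, hk⟩ : Fin N).rev := rfl
          rw [hgj, haT]
          exact congrArg₂ (fun r (w : Vec d) => r • w)
            (H_congr H (by omega) (by omega)) rfl
        · rw [if_neg (by omega), if_neg hj1, hF]; simp only []
          rw [dif_neg (by omega), add_zero]
    have hT1 := sum_single_nat (n := N) ((a : ℕ) - 1) hk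
      (fun t => t + 1 = (a : ℕ)) (fun t _ => by omega)
      (fun j => antiT H ⟨(a : ℕ) - 1, hk⟩ j • g j.castSucc)
    have hT1v : antiT H ⟨(a : ℕ) - 1, hk⟩ ⟨(a : ℕ) - 1, hk⟩ • g (⟨(a : ℕ) - 1, hk⟩ : Fin N).castSucc
        = H ⟨c, hcN⟩ ⟨c, hcN⟩ • g ⟨(a : ℕ) - 1, by omega⟩ := by
      have hrevk : ((⟨(a : ℕ) - 1, hk⟩ : Fin N).rev : ℕ) = c := by
        rw [Fin.val_rev, hkv]; omega
      have hgj : g (⟨(a : ℕ) - 1, hk⟩ : Fin N).castSucc = g ⟨(a : ℕ) - 1, by omega⟩ := rfl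
      have haT : antiT H ⟨(a : ℕ) - 1, hk⟩ ⟨(a : ℕ) - 1, hk⟩
          = H (⟨(a : ℕ) - 1, hk⟩ : Fin N).rev (⟨(a : ℕ) - 1, hk⟩ : Fin N).rev := rfl
      rw [hgj, haT]
      exact congrArg₂ (fun r (w : Vec d) => r • w)
        (H_congr H (by omega) (by omega)) rfl
    have hT2 : ∑ j : Fin N, F (j : ℕ) = ∑ t ∈ Finset.range N, F t :=
      Fin.sum_univ_eq_sum_range F N
    have hgenfin : L • (y ⟨(a : ℕ) - 1, by omega⟩ - y a)
        = H ⟨c, hcN⟩ ⟨c, hcN⟩ • g ⟨(a : ℕ) - 1, by omega⟩ + ∑ t ∈ Finset.range N, F t := by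
      rw [hSsum, Finset.sum_congr rfl (fun j _ => hsplit j), Finset.sum_add_distrib,
        hT1, hT1v, hT2]
    have hfin : ∑ t ∈ Finset.range N, F t
        = L • (y ⟨(a : ℕ) - 1, by omega⟩ - y a)
          - H ⟨c, hcN⟩ ⟨c, hcN⟩ • g ⟨(a : ℕ) - 1, by omega⟩ := by
      rw [hgenfin]; abel
    rw [hfin, smul_sub]
    module

end AuxPEP2
section AuxPEP3

open Matrix

variable {d N : ℕ}

private lemma contraction {H : Matrix (Fin N) (Fin N) ℝ} {g : Fin (N + 1) → Vec d}
    {vv : Fin (N + 1) → Vec d}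
    (hv : ∀ a, vv a = ∑ b, Htilde H b.rev a.rev • g b) (c : Fin (N + 1)) :
    ∑ b, antiT ((Htilde H)⁻¹) c b • vv b = g c := by
  have hinv := htilde_mul_inv H
  calc ∑ b, antiT ((Htilde H)⁻¹) c b • vv b
      = ∑ b : Fin (N+1), ∑ e : Fin (N+1), ((Htilde H)⁻¹ b.rev c.rev * Htilde H e.rev b.rev) • g e := by
        refine Finset.sum_congr rfl fun b _ => ?_
        rw [hv b, Finset.smul_sum]
        refine Finset.sum_congr rfl fun e _ => ?_
        rw [smul_smul]; rfl
    _ = ∑ e : Fin (N+1), (∑ b : Fin (N+1), Htilde H e.rev b.rev * (Htilde H)⁻¹ b.rev c.rev) • g e := by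
        rw [Finset.sum_comm]
        refine Finset.sum_congr rfl fun e _ => ?_
        rw [← Finset.sum_smul]
        congr 1
        exact Finset.sum_congr rfl fun b _ => by ring
    _ = ∑ e : Fin (N+1), ((Htilde H * (Htilde H)⁻¹) e.rev c.rev) • g e := by
        refine Finset.sum_congr rfl fun e _ => ?_
        congr 1
        rw [Matrix.mul_apply]
        exact Fintype.sum_equiv Fin.revPerm _ _ fun b => rfl
    _ = g c := by
        rw [hinv]
        rw [Finset.sum_eq_single c]
        · rw [Matrix.one_apply_eq, one_smul]
        · intro e _ he
          rw [Matrix.one_apply_ne (fun hh => he (Fin.rev_injective hh)), zero_smul]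
        · intro h; exact absurd (Finset.mem_univ _) h

private lemma g1tel {nu : Fin (N + 1) → Fin (N + 1) → ℝ} (hN : 1 ≤ N)
    (hG1' : ∀ k : Fin (N + 1), (∑ i, nu i k) - ∑ j, nu k j =
      if k = Fin.last N then 1 else if k = 0 then -1 else 0)
    (φ : Fin (N + 1) → ℝ) :
    ∑ i, ∑ j, nu i j * (φ j - φ i) = φ (Fin.last N) - φ 0 := by
  have e1 : ∑ i : Fin (N+1), ∑ j, nu i j * (φ j - φ i)
      = ∑ k : Fin (N+1), ((∑ i, nu i k) - ∑ j, nu k j) * φ k := by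
    have l1 : ∑ i : Fin (N+1), ∑ j, nu i j * (φ j - φ i)
        = (∑ i : Fin (N+1), ∑ j, nu i j * φ j) - ∑ i : Fin (N+1), ∑ j, nu i j * φ i := by
      rw [← Finset.sum_sub_distrib]
      refine Finset.sum_congr rfl fun i _ => ?_
      rw [← Finset.sum_sub_distrib]
      exact Finset.sum_congr rfl fun j _ => by ring
    have l2 : ∑ i : Fin (N+1), ∑ j, nu i j * φ j
        = ∑ k : Fin (N+1), (∑ i, nu i k) * φ k := by
      rw [Finset.sum_comm]
      exact Finset.sum_congr rfl fun k _ => by rw [Finset.sum_mul]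
    have l3 : ∑ i : Fin (N+1), ∑ j, nu i j * φ i
        = ∑ k : Fin (N+1), (∑ j, nu k j) * φ k :=
      Finset.sum_congr rfl fun k _ => by rw [Finset.sum_mul]
    rw [l1, l2, l3, ← Finset.sum_sub_distrib]
    exact Finset.sum_congr rfl fun k _ => by ring
  rw [e1, Finset.sum_congr rfl fun k _ => by rw [hG1' k]]
  have hlast0 : (Fin.last N) ≠ (0 : Fin (N + 1)) := by
    intro hh
    have : (Fin.last N : ℕ) = 0 := by rw [hh]; rfl
    simp [Fin.val_last] at this; omega
  have e2 : ∀ k : Fin (N+1), (if k = Fin.last N then (1:ℝ) else if k = 0 then -1 else 0) * φ k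
      = (if k = Fin.last N then φ k else 0) + (if k = 0 then -φ k else 0) := by
    intro k
    by_cases h1 : k = Fin.last N
    · subst h1; rw [if_pos rfl, if_pos rfl, if_neg hlast0]; ring
    · by_cases h2 : k = 0
      · subst h2; rw [if_neg h1, if_neg h1, if_pos rfl, if_pos rfl]; ring
      · rw [if_neg h1, if_neg h1, if_neg h2, if_neg h2]; ring
  rw [Finset.sum_congr rfl fun k _ => e2 k, Finset.sum_add_distrib]
  rw [Finset.sum_ite_eq' Finset.univ (Fin.last N) φ,
    Finset.sum_ite_eq' Finset.univ (0 : Fin (N+1)) (fun k => -φ k)]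
  simp only [Finset.mem_univ, if_true]
  ring

end AuxPEP3
section AuxPEP4

open Matrix

variable {d N : ℕ}

private lemma colsum {nu : Fin (N + 1) → Fin (N + 1) → ℝ}
    (hsp : ∀ i j : Fin (N + 1),
      ¬ ((j : ℕ) = (i : ℕ) + 1 ∨ (i : ℕ) = (j : ℕ) + 1 ∨
          ((i : ℕ) = N ∧ (j : ℕ) < N)) → nu i j = 0)
    (c : Fin (N + 1)) (X : Fin (N + 1) → ℝ) :
    ∑ i, nu i c * X i =
      (if h : 1 ≤ (c : ℕ) then
        nu ⟨(c : ℕ) - 1, by have := c.isLt; omega⟩ c * X ⟨(c : ℕ) - 1, by have := c.isLt; omega⟩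
       else 0)
      + (if h : (c : ℕ) < N then
          nu ⟨(c : ℕ) + 1, by omega⟩ c * X ⟨(c : ℕ) + 1, by omega⟩ else 0)
      + (if h : (c : ℕ) + 2 ≤ N then nu (Fin.last N) c * X (Fin.last N) else 0) := by
  have hcle : (c : ℕ) < N + 1 := c.isLt
  have hsplit : ∀ i : Fin (N + 1), nu i c * X i =
      ((if (i : ℕ) + 1 = (c : ℕ) then nu i c * X i else 0)
        + (if (i : ℕ) = (c : ℕ) + 1 ∧ (c : ℕ) < N then nu i c * X i else 0))
      + (if (i : ℕ) = N ∧ (c : ℕ) + 2 ≤ N then nu i c * X i else 0) := by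
    intro i
    have hile : (i : ℕ) < N + 1 := i.isLt
    by_cases h1 : (i : ℕ) + 1 = (c : ℕ)
    · rw [if_pos h1, if_neg (show ¬((i : ℕ) = (c : ℕ) + 1 ∧ (c : ℕ) < N) by omega),
        if_neg (show ¬((i : ℕ) = N ∧ (c : ℕ) + 2 ≤ N) by omega), add_zero, add_zero]
    · by_cases h2 : (i : ℕ) = (c : ℕ) + 1 ∧ (c : ℕ) < N
      · rw [if_neg h1, if_pos h2,
          if_neg (show ¬((i : ℕ) = N ∧ (c : ℕ) + 2 ≤ N) by omega), zero_add, add_zero]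
      · by_cases h3 : (i : ℕ) = N ∧ (c : ℕ) + 2 ≤ N
        · rw [if_neg h1, if_neg h2, if_pos h3, zero_add, zero_add]
        · rw [if_neg h1, if_neg h2, if_neg h3, hsp i c (by omega), zero_mul]
          ring
  rw [Finset.sum_congr rfl fun i _ => hsplit i, Finset.sum_add_distrib,
    Finset.sum_add_distrib]
  have e1 : ∑ i : Fin (N + 1), (if (i : ℕ) + 1 = (c : ℕ) then nu i c * X i else 0)
      = (if h : 1 ≤ (c : ℕ) then
          nu ⟨(c : ℕ) - 1, by omega⟩ c * X ⟨(c : ℕ) - 1, by omega⟩ else 0) := by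
    by_cases hc : 1 ≤ (c : ℕ)
    · rw [dif_pos hc]
      exact sum_single_nat ((c : ℕ) - 1) (by omega) (fun t => t + 1 = (c : ℕ))
        (fun t _ => by omega) (fun i => nu i c * X i)
    · rw [dif_neg hc]
      exact sum_zero_nat (fun t => t + 1 = (c : ℕ)) (fun t _ => by omega)
        (fun i => nu i c * X i)
  have e2 : ∑ i : Fin (N + 1), (if (i : ℕ) = (c : ℕ) + 1 ∧ (c : ℕ) < N then nu i c * X i else 0)
      = (if h : (c : ℕ) < N then
          nu ⟨(c : ℕ) + 1, by omega⟩ c * X ⟨(c : ℕ) + 1, by omega⟩ else 0) := by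
    by_cases hc : (c : ℕ) < N
    · rw [dif_pos hc]
      exact sum_single_nat ((c : ℕ) + 1) (by omega)
        (fun t => t = (c : ℕ) + 1 ∧ (c : ℕ) < N) (fun t _ => by omega)
        (fun i => nu i c * X i)
    · rw [dif_neg hc]
      exact sum_zero_nat (fun t => t = (c : ℕ) + 1 ∧ (c : ℕ) < N) (fun t _ => by omega)
        (fun i => nu i c * X i)
  have e3 : ∑ i : Fin (N + 1), (if (i : ℕ) = N ∧ (c : ℕ) + 2 ≤ N then nu i c * X i else 0)
      = (if h : (c : ℕ) + 2 ≤ N then nu (Fin.last N) c * X (Fin.last N) else 0) := by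
    by_cases hc : (c : ℕ) + 2 ≤ N
    · rw [dif_pos hc]
      exact sum_single_nat (n := N + 1) N (by omega) (fun t => t = N ∧ (c : ℕ) + 2 ≤ N)
        (fun t _ => by omega) (fun i => nu i c * X i)
    · rw [dif_neg hc]
      exact sum_zero_nat (fun t => t = N ∧ (c : ℕ) + 2 ≤ N) (fun t _ => by omega)
        (fun i => nu i c * X i)
  rw [e1, e2, e3]

private lemma rowA {nu : Fin (N + 1) → Fin (N + 1) → ℝ} (c : Fin (N + 1))
    (u : Fin (N + 1) → ℝ) :
    ∑ a, matA nu c a * u a =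
      (if h : 1 ≤ (c : ℕ) then nu ⟨(c : ℕ) - 1, by have := c.isLt; omega⟩ c * u c else 0)
      + (if h : (c : ℕ) < N then
          (if (c : ℕ) = N - 1 then -nu (Fin.last N) c
           else -nu ⟨(c : ℕ) + 1, by omega⟩ c - nu (Fin.last N) c) * u ⟨(c : ℕ) + 1, by omega⟩
         else 0)
      + (-nu (Fin.last N) c) * ∑ a : Fin (N + 1), (if (c : ℕ) + 2 ≤ (a : ℕ) then u a else 0) := by
  have hcle : (c : ℕ) < N + 1 := c.isLt
  have hsplit : ∀ a : Fin (N + 1), matA nu c a * u a =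
      ((if (c : ℕ) = (a : ℕ) ∧ 1 ≤ (c : ℕ) then
          nu ⟨(c : ℕ) - 1, by omega⟩ c * u a else 0)
        + (if (a : ℕ) = (c : ℕ) + 1 then
            (if (c : ℕ) = N - 1 then -nu (Fin.last N) c
             else -nu a c - nu (Fin.last N) c) * u a else 0))
      + (if (c : ℕ) + 2 ≤ (a : ℕ) then (-nu (Fin.last N) c) * u a else 0) := by
    intro a
    have hale : (a : ℕ) < N + 1 := a.isLt
    unfold matA
    by_cases h1 : (c : ℕ) = (a : ℕ) ∧ 1 ≤ (c : ℕ)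
    · rw [if_pos h1, if_pos h1, if_neg (show ¬((a : ℕ) = (c : ℕ) + 1) by omega),
        if_neg (show ¬((c : ℕ) + 2 ≤ (a : ℕ)) by omega), add_zero, add_zero]
    · rw [if_neg h1, if_neg h1]
      by_cases h2 : (a : ℕ) = (c : ℕ) + 1
      · rw [if_pos h2, if_pos h2,
          if_neg (show ¬((c : ℕ) + 2 ≤ (a : ℕ)) by omega), zero_add, add_zero]
      · rw [if_neg h2, if_neg h2]
        by_cases h3 : (c : ℕ) + 2 ≤ (a : ℕ)
        · rw [if_pos h3, if_pos h3, zero_add, zero_add]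
        · rw [if_neg h3, if_neg h3, zero_mul, add_zero, add_zero]
  rw [Finset.sum_congr rfl fun a _ => hsplit a, Finset.sum_add_distrib,
    Finset.sum_add_distrib]
  have e1 : ∑ a : Fin (N + 1), (if (c : ℕ) = (a : ℕ) ∧ 1 ≤ (c : ℕ) then
        nu ⟨(c : ℕ) - 1, by omega⟩ c * u a else 0)
      = (if h : 1 ≤ (c : ℕ) then nu ⟨(c : ℕ) - 1, by omega⟩ c * u c else 0) := by
    by_cases hc : 1 ≤ (c : ℕ)
    · rw [dif_pos hc]
      exact sum_single_nat (n := N + 1) (c : ℕ) c.isLt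
        (fun t => (c : ℕ) = t ∧ 1 ≤ (c : ℕ)) (fun t _ => by omega)
        (fun a => nu ⟨(c : ℕ) - 1, by omega⟩ c * u a)
    · rw [dif_neg hc]
      exact sum_zero_nat (fun t => (c : ℕ) = t ∧ 1 ≤ (c : ℕ)) (fun t _ => by omega)
        (fun a => nu ⟨(c : ℕ) - 1, by omega⟩ c * u a)
  have e2 : ∑ a : Fin (N + 1), (if (a : ℕ) = (c : ℕ) + 1 then
        (if (c : ℕ) = N - 1 then -nu (Fin.last N) c
         else -nu a c - nu (Fin.last N) c) * u a else 0)
      = (if h : (c : ℕ) < N then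
          (if (c : ℕ) = N - 1 then -nu (Fin.last N) c
           else -nu ⟨(c : ℕ) + 1, by omega⟩ c - nu (Fin.last N) c) * u ⟨(c : ℕ) + 1, by omega⟩
         else 0) := by
    by_cases hc : (c : ℕ) < N
    · rw [dif_pos hc]
      exact sum_single_nat (n := N + 1) ((c : ℕ) + 1) (by omega)
        (fun t => t = (c : ℕ) + 1) (fun t _ => Iff.rfl)
        (fun a => (if (c : ℕ) = N - 1 then -nu (Fin.last N) c
           else -nu a c - nu (Fin.last N) c) * u a)
    · rw [dif_neg hc]
      exact sum_zero_nat (fun t => t = (c : ℕ) + 1) (fun t _ => by omega)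
        (fun a => (if (c : ℕ) = N - 1 then -nu (Fin.last N) c
           else -nu a c - nu (Fin.last N) c) * u a)
  have e3 : ∑ a : Fin (N + 1), (if (c : ℕ) + 2 ≤ (a : ℕ) then (-nu (Fin.last N) c) * u a else 0)
      = (-nu (Fin.last N) c) * ∑ a : Fin (N + 1), (if (c : ℕ) + 2 ≤ (a : ℕ) then u a else 0) := by
    rw [Finset.mul_sum]
    exact Finset.sum_congr rfl fun a _ => by split_ifs <;> simp
  rw [e1, e2, e3]

end AuxPEP4
section AuxPEP5

open Matrix

variable {d N : ℕ}

private lemma sumA_eq {nu : Fin (N + 1) → Fin (N + 1) → ℝ}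
    (hsp : ∀ i j : Fin (N + 1),
      ¬ ((j : ℕ) = (i : ℕ) + 1 ∨ (i : ℕ) = (j : ℕ) + 1 ∨
          ((i : ℕ) = N ∧ (j : ℕ) < N)) → nu i j = 0)
    (hN : 1 ≤ N) (Z : ℕ → Vec d) (g vv : Fin (N + 1) → Vec d)
    (hvv : ∀ a : Fin (N + 1), 1 ≤ (a : ℕ) → vv a = Z ((a : ℕ) - 1) - Z (a : ℕ)) :
    ∑ c : Fin (N + 1), ∑ a : Fin (N + 1), matA nu c a * ⟪g c, vv a⟫
      = ∑ i : Fin (N + 1), ∑ j : Fin (N + 1), nu i j * ⟪g j, Z (i : ℕ) - Z (j : ℕ)⟫ := by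
  have htail : ∀ m : ℕ, 1 ≤ m → m ≤ N + 1 →
      (∑ b : Fin (N + 1), if m ≤ (b : ℕ) then vv b else 0) = Z (m - 1) - Z N := by
    intro m h1 h2
    have hpt : ∀ b : Fin (N + 1), (if m ≤ (b : ℕ) then vv b else 0)
        = (if m ≤ (b : ℕ) then Z ((b : ℕ) - 1) - Z (b : ℕ) else 0) := by
      intro b
      by_cases hb : m ≤ (b : ℕ)
      · rw [if_pos hb, if_pos hb, hvv b (by omega)]
      · rw [if_neg hb, if_neg hb]
    rw [Finset.sum_congr rfl fun b _ => hpt b, tele Z m h1 h2]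
  have hcomm : ∑ i : Fin (N + 1), ∑ j : Fin (N + 1), nu i j * ⟪g j, Z (i : ℕ) - Z (j : ℕ)⟫
      = ∑ j : Fin (N + 1), ∑ i : Fin (N + 1), nu i j * ⟪g j, Z (i : ℕ) - Z (j : ℕ)⟫ :=
    Finset.sum_comm
  rw [hcomm]
  refine Finset.sum_congr rfl fun c _ => ?_
  have hcle : (c : ℕ) < N + 1 := c.isLt
  have hrow := rowA (nu := nu) c (fun a => ⟪g c, vv a⟫)
  have hcol := colsum hsp c (fun i => ⟪g c, Z (i : ℕ) - Z (c : ℕ)⟫)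
  rw [hrow, hcol]
  by_cases hcN : (c : ℕ) < N
  · -- tail sum
    have htl : ∑ a : Fin (N + 1), (if (c : ℕ) + 2 ≤ (a : ℕ) then ⟪g c, vv a⟫ else 0)
        = ⟪g c, Z ((c : ℕ) + 1) - Z N⟫ := by
      have hpt : ∀ a : Fin (N + 1), (if (c : ℕ) + 2 ≤ (a : ℕ) then ⟪g c, vv a⟫ else 0)
          = ⟪g c, (if (c : ℕ) + 2 ≤ (a : ℕ) then vv a else 0)⟫ := by
        intro a
        split_ifs with h
        · rfl
        · rw [inner_zero_right]
      rw [Finset.sum_congr rfl fun a _ => hpt a, ← inner_sum,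
        htail ((c : ℕ) + 2) (by omega) (by omega)]
      norm_num
    rw [htl, dif_pos hcN, dif_pos hcN]
    have hvv2 : vv ⟨(c : ℕ) + 1, by omega⟩ = Z (c : ℕ) - Z ((c : ℕ) + 1) :=
      hvv ⟨(c : ℕ) + 1, by omega⟩ (Nat.succ_le_succ (Nat.zero_le _))
    rw [hvv2]
    by_cases hc1 : (c : ℕ) = N - 1
    · -- here ⟨c+1⟩ = last, Z (c+1) = Z N, and the (N,c) column entry is via guard2
      have hZN : Z ((c : ℕ) + 1) = Z N := by rw [show (c : ℕ) + 1 = N by omega]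
      have hlst : (⟨(c : ℕ) + 1, by omega⟩ : Fin (N + 1)) = Fin.last N :=
        Fin.ext (by simp [Fin.val_last]; omega)
      rw [if_pos hc1, dif_neg (show ¬((c : ℕ) + 2 ≤ N) by omega), hlst, hZN]
      by_cases hc0 : 1 ≤ (c : ℕ)
      · rw [dif_pos hc0, dif_pos hc0, hvv c hc0]
        simp only [inner_sub_right, Fin.val_last]
        ring
      · rw [dif_neg hc0, dif_neg hc0]
        simp only [inner_sub_right, Fin.val_last]
        ring
    · have hc2N : (c : ℕ) + 2 ≤ N := by omega
      rw [if_neg hc1, dif_pos hc2N]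
      have hlstv : ((Fin.last N : Fin (N + 1)) : ℕ) = N := Fin.val_last N
      rw [hlstv]
      by_cases hc0 : 1 ≤ (c : ℕ)
      · rw [dif_pos hc0, dif_pos hc0, hvv c hc0]
        simp only [inner_sub_right, Fin.val_last]
        ring
      · rw [dif_neg hc0, dif_neg hc0]
        simp only [inner_sub_right, Fin.val_last]
        ring
  · -- c = N : tail is empty, second entries vanish
    have hc0 : 1 ≤ (c : ℕ) := by omega
    have htl0 : ∑ a : Fin (N + 1), (if (c : ℕ) + 2 ≤ (a : ℕ) then ⟪g c, vv a⟫ else 0) = 0 :=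
      sum_zero_nat (fun t => (c : ℕ) + 2 ≤ t) (fun t ht => by omega)
        (fun a => ⟪g c, vv a⟫)
    rw [htl0, dif_neg hcN, dif_neg hcN, dif_neg (show ¬((c : ℕ) + 2 ≤ N) by omega),
      dif_pos hc0, dif_pos hc0, hvv c hc0]
    simp only [inner_sub_right]
    ring

end AuxPEP5
section AuxPEP6

open Matrix

variable {d N : ℕ}

private noncomputable def QZf (Z : ℕ → Vec d) : ℕ → ℕ → ℝ :=
  fun s t => ⟪Z s - Z t, Z s - Z t⟫

private lemma QZf_symm (Z : ℕ → Vec d) (s t : ℕ) : QZf Z s t = QZf Z t s := by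
  unfold QZf
  rw [← neg_sub (Z t) (Z s), inner_neg_neg]

private noncomputable def NNf (N : ℕ) (nu : Fin (N + 1) → Fin (N + 1) → ℝ) : ℕ → ℕ → ℝ :=
  fun s t => if h : s < N + 1 ∧ t < N + 1 then nu ⟨s, h.1⟩ ⟨t, h.2⟩ else 0

private lemma sumB_eq {nu : Fin (N + 1) → Fin (N + 1) → ℝ}
    (hsp : ∀ i j : Fin (N + 1),
      ¬ ((j : ℕ) = (i : ℕ) + 1 ∨ (i : ℕ) = (j : ℕ) + 1 ∨
          ((i : ℕ) = N ∧ (j : ℕ) < N)) → nu i j = 0)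
    (hN : 1 ≤ N) (Z : ℕ → Vec d) (vv : Fin (N + 1) → Vec d)
    (hvv : ∀ a : Fin (N + 1), 1 ≤ (a : ℕ) → vv a = Z ((a : ℕ) - 1) - Z (a : ℕ)) :
    ∑ a : Fin (N + 1), ∑ b : Fin (N + 1), matB nu a b * ⟪vv a, vv b⟫
      = ∑ i : Fin (N + 1), ∑ j : Fin (N + 1), nu i j * QZf Z (i : ℕ) (j : ℕ) := by
  have htail : ∀ m : ℕ, 1 ≤ m → m ≤ N + 1 →
      (∑ b : Fin (N + 1), if m ≤ (b : ℕ) then vv b else 0) = Z (m - 1) - Z N := by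
    intro m h1 h2
    have hpt : ∀ b : Fin (N + 1), (if m ≤ (b : ℕ) then vv b else 0)
        = (if m ≤ (b : ℕ) then Z ((b : ℕ) - 1) - Z (b : ℕ) else 0) := by
      intro b
      by_cases hb : m ≤ (b : ℕ)
      · rw [if_pos hb, if_pos hb, hvv b (by omega)]
      · rw [if_neg hb, if_neg hb]
    rw [Finset.sum_congr rfl fun b _ => hpt b, tele Z m h1 h2]
  have hBpt : ∀ a b : Fin (N + 1), matB nu a b
      = (if (a : ℕ) = (b : ℕ) ∧ 1 ≤ (a : ℕ) then
           (if (a : ℕ) = N then nu ⟨N - 1, by omega⟩ (Fin.last N)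
            else nu ⟨(a : ℕ) - 1, by have := a.isLt; omega⟩ a
              + nu a ⟨(a : ℕ) - 1, by have := a.isLt; omega⟩)
         else 0)
        + ∑ l : Fin (N + 1), (if (l : ℕ) < min (a : ℕ) (b : ℕ) then nu (Fin.last N) l else 0) := by
    intro a b
    unfold matB
    by_cases h0 : (a : ℕ) = 0 ∨ (b : ℕ) = 0
    · rw [if_pos h0, if_neg (show ¬((a : ℕ) = (b : ℕ) ∧ 1 ≤ (a : ℕ)) by omega),
        Finset.sum_eq_zero (fun l _ => if_neg (by omega)), add_zero]
    · rw [if_neg h0]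
      by_cases hab : (a : ℕ) = (b : ℕ)
      · rw [if_pos hab, if_pos (show (a : ℕ) = (b : ℕ) ∧ 1 ≤ (a : ℕ) by omega)]
        by_cases haN : (a : ℕ) = N
        · rw [if_pos haN, if_pos haN, show min (a : ℕ) (b : ℕ) = N by omega]
        · rw [if_neg haN, if_neg haN, show min (a : ℕ) (b : ℕ) = (a : ℕ) by omega]
      · rw [if_neg hab, if_neg (show ¬((a : ℕ) = (b : ℕ) ∧ 1 ≤ (a : ℕ)) by omega), zero_add]
  have hLsplit : ∑ a : Fin (N + 1), ∑ b : Fin (N + 1), matB nu a b * ⟪vv a, vv b⟫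
      = (∑ a : Fin (N + 1), ∑ b : Fin (N + 1),
          (if (a : ℕ) = (b : ℕ) ∧ 1 ≤ (a : ℕ) then
            (if (a : ℕ) = N then nu ⟨N - 1, by omega⟩ (Fin.last N)
             else nu ⟨(a : ℕ) - 1, by have := a.isLt; omega⟩ a
               + nu a ⟨(a : ℕ) - 1, by have := a.isLt; omega⟩) * ⟪vv a, vv b⟫
           else 0))
        + ∑ a : Fin (N + 1), ∑ b : Fin (N + 1),
            (∑ l : Fin (N + 1), (if (l : ℕ) < min (a : ℕ) (b : ℕ) then nu (Fin.last N) l else 0))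
              * ⟪vv a, vv b⟫ := by
    rw [← Finset.sum_add_distrib]
    refine Finset.sum_congr rfl fun a _ => ?_
    rw [← Finset.sum_add_distrib]
    refine Finset.sum_congr rfl fun b _ => ?_
    rw [hBpt a b, add_mul]
    congr 1
    split_ifs <;> simp
  rw [hLsplit]
  have hP1 : ∑ a : Fin (N + 1), ∑ b : Fin (N + 1),
        (if (a : ℕ) = (b : ℕ) ∧ 1 ≤ (a : ℕ) then
          (if (a : ℕ) = N then nu ⟨N - 1, by omega⟩ (Fin.last N)
           else nu ⟨(a : ℕ) - 1, by have := a.isLt; omega⟩ a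
             + nu a ⟨(a : ℕ) - 1, by have := a.isLt; omega⟩) * ⟪vv a, vv b⟫
         else 0)
      = ∑ t ∈ Finset.range N,
          ((if t + 1 = N then NNf N nu (N - 1) N
            else NNf N nu t (t + 1) + NNf N nu (t + 1) t) * QZf Z t (t + 1)) := by
    have hinner : ∀ a : Fin (N + 1), ∑ b : Fin (N + 1),
        (if (a : ℕ) = (b : ℕ) ∧ 1 ≤ (a : ℕ) then
          (if (a : ℕ) = N then nu ⟨N - 1, by omega⟩ (Fin.last N)
           else nu ⟨(a : ℕ) - 1, by have := a.isLt; omega⟩ a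
             + nu a ⟨(a : ℕ) - 1, by have := a.isLt; omega⟩) * ⟪vv a, vv b⟫
         else 0)
        = (if h : 1 ≤ (a : ℕ) ∧ (a : ℕ) < N + 1 then
            (if (a : ℕ) = N then NNf N nu (N - 1) N
             else NNf N nu ((a : ℕ) - 1) (a : ℕ) + NNf N nu (a : ℕ) ((a : ℕ) - 1))
              * QZf Z ((a : ℕ) - 1) (a : ℕ) else 0) := by
      intro a
      by_cases ha : 1 ≤ (a : ℕ)
      · have hs := sum_single_nat (n := N + 1) (a : ℕ) a.isLt
          (fun t => (a : ℕ) = t ∧ 1 ≤ (a : ℕ)) (fun t _ => by omega)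
          (fun b => (if (a : ℕ) = N then nu ⟨N - 1, by omega⟩ (Fin.last N)
           else nu ⟨(a : ℕ) - 1, by have := a.isLt; omega⟩ a
             + nu a ⟨(a : ℕ) - 1, by have := a.isLt; omega⟩) * ⟪vv a, vv b⟫)
        rw [hs]
        rw [dif_pos ⟨ha, a.isLt⟩]
        have hq : ⟪vv a, vv (⟨(a : ℕ), a.isLt⟩ : Fin (N + 1))⟫ = QZf Z ((a : ℕ) - 1) (a : ℕ) := by
          have he : (⟨(a : ℕ), a.isLt⟩ : Fin (N + 1)) = a := Fin.eta a a.isLt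
          rw [he, hvv a ha]; rfl
        rw [hq]
        by_cases haN : (a : ℕ) = N
        · rw [if_pos haN, if_pos haN,
            show NNf N nu (N - 1) N = nu ⟨N - 1, by omega⟩ (Fin.last N) from
              by (unfold NNf; rw [dif_pos ⟨by omega, by omega⟩] <;> rfl)]
        · rw [if_neg haN, if_neg haN,
            show NNf N nu ((a : ℕ) - 1) (a : ℕ)
                = nu ⟨(a : ℕ) - 1, by have := a.isLt; omega⟩ a from
              by (unfold NNf; rw [dif_pos ⟨by have := a.isLt; omega, a.isLt⟩] <;> rfl),
            show NNf N nu (a : ℕ) ((a : ℕ) - 1)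
                = nu a ⟨(a : ℕ) - 1, by have := a.isLt; omega⟩ from
              by (unfold NNf; rw [dif_pos ⟨a.isLt, by have := a.isLt; omega⟩] <;> rfl)]
      · have hz := sum_zero_nat (n := N + 1)
          (fun t => (a : ℕ) = t ∧ 1 ≤ (a : ℕ)) (fun t _ => by omega)
          (fun b => (if (a : ℕ) = N then nu ⟨N - 1, by omega⟩ (Fin.last N)
           else nu ⟨(a : ℕ) - 1, by have := a.isLt; omega⟩ a
             + nu a ⟨(a : ℕ) - 1, by have := a.isLt; omega⟩) * ⟪vv a, vv b⟫)
        rw [hz]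
        rw [dif_neg (by omega)]
    rw [Finset.sum_congr rfl fun a _ => hinner a,
      Fin.sum_univ_eq_sum_range (fun t : ℕ => if h : 1 ≤ t ∧ t < N + 1 then
            (if t = N then NNf N nu (N - 1) N
             else NNf N nu (t - 1) t + NNf N nu t (t - 1)) * QZf Z (t - 1) t else 0) (N + 1),
      Finset.sum_range_succ']
    rw [dif_neg (by omega), add_zero]
    refine Finset.sum_congr rfl fun k hk => ?_
    have hkN : k < N := Finset.mem_range.mp hk
    rw [dif_pos (show 1 ≤ k + 1 ∧ k + 1 < N + 1 by omega)]
    rfl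
  have hP2 : ∑ a : Fin (N + 1), ∑ b : Fin (N + 1),
        (∑ l : Fin (N + 1), (if (l : ℕ) < min (a : ℕ) (b : ℕ) then nu (Fin.last N) l else 0))
          * ⟪vv a, vv b⟫
      = ∑ t ∈ Finset.range N, NNf N nu N t * QZf Z t N := by
    have hpt : ∀ a b : Fin (N + 1),
        (∑ l : Fin (N + 1), (if (l : ℕ) < min (a : ℕ) (b : ℕ) then nu (Fin.last N) l else 0))
          * ⟪vv a, vv b⟫
        = ∑ l : Fin (N + 1), (if (l : ℕ) + 1 ≤ (a : ℕ) ∧ (l : ℕ) + 1 ≤ (b : ℕ) then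
            nu (Fin.last N) l * ⟪vv a, vv b⟫ else 0) := by
      intro a b
      rw [Finset.sum_mul]
      refine Finset.sum_congr rfl fun l _ => ?_
      by_cases hl : (l : ℕ) < min (a : ℕ) (b : ℕ)
      · rw [if_pos hl, if_pos (by omega)]
      · rw [if_neg hl, if_neg (by omega), zero_mul]
    have hswap : ∑ a : Fin (N + 1), ∑ b : Fin (N + 1),
        (∑ l : Fin (N + 1), (if (l : ℕ) < min (a : ℕ) (b : ℕ) then nu (Fin.last N) l else 0))
          * ⟪vv a, vv b⟫
        = ∑ l : Fin (N + 1), ∑ a : Fin (N + 1), ∑ b : Fin (N + 1),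
            (if (l : ℕ) + 1 ≤ (a : ℕ) ∧ (l : ℕ) + 1 ≤ (b : ℕ) then
              nu (Fin.last N) l * ⟪vv a, vv b⟫ else 0) := by
      rw [Finset.sum_congr rfl fun a _ => Finset.sum_congr rfl fun b _ => hpt a b]
      have hmid : ∀ a : Fin (N + 1), ∑ b : Fin (N + 1), ∑ l : Fin (N + 1),
          (if (l : ℕ) + 1 ≤ (a : ℕ) ∧ (l : ℕ) + 1 ≤ (b : ℕ) then
            nu (Fin.last N) l * ⟪vv a, vv b⟫ else 0)
          = ∑ l : Fin (N + 1), ∑ b : Fin (N + 1),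
            (if (l : ℕ) + 1 ≤ (a : ℕ) ∧ (l : ℕ) + 1 ≤ (b : ℕ) then
              nu (Fin.last N) l * ⟪vv a, vv b⟫ else 0) := fun a => Finset.sum_comm
      rw [Finset.sum_congr rfl fun a _ => hmid a]
      exact Finset.sum_comm
    rw [hswap]
    have hper : ∀ l : Fin (N + 1), ∑ a : Fin (N + 1), ∑ b : Fin (N + 1),
        (if (l : ℕ) + 1 ≤ (a : ℕ) ∧ (l : ℕ) + 1 ≤ (b : ℕ) then
          nu (Fin.last N) l * ⟪vv a, vv b⟫ else 0)
        = NNf N nu N (l : ℕ) * QZf Z (l : ℕ) N := by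
      intro l
      have hpt2 : ∀ a b : Fin (N + 1),
          (if (l : ℕ) + 1 ≤ (a : ℕ) ∧ (l : ℕ) + 1 ≤ (b : ℕ) then
            nu (Fin.last N) l * ⟪vv a, vv b⟫ else 0)
          = nu (Fin.last N) l * ⟪(if (l : ℕ) + 1 ≤ (a : ℕ) then vv a else 0),
              (if (l : ℕ) + 1 ≤ (b : ℕ) then vv b else 0)⟫ := by
        intro a b
        by_cases h1 : (l : ℕ) + 1 ≤ (a : ℕ) <;> by_cases h2 : (l : ℕ) + 1 ≤ (b : ℕ) <;>
          simp [h1, h2]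
      rw [Finset.sum_congr rfl fun a _ => Finset.sum_congr rfl fun b _ => hpt2 a b]
      have hfac : ∑ a : Fin (N + 1), ∑ b : Fin (N + 1),
          nu (Fin.last N) l * ⟪(if (l : ℕ) + 1 ≤ (a : ℕ) then vv a else 0),
            (if (l : ℕ) + 1 ≤ (b : ℕ) then vv b else 0)⟫
          = nu (Fin.last N) l * ⟪∑ a : Fin (N + 1), (if (l : ℕ) + 1 ≤ (a : ℕ) then vv a else 0),
              ∑ b : Fin (N + 1), (if (l : ℕ) + 1 ≤ (b : ℕ) then vv b else 0)⟫ := by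
        rw [sum_inner, Finset.mul_sum]
        refine Finset.sum_congr rfl fun a _ => ?_
        rw [inner_sum, Finset.mul_sum]
      rw [hfac, htail ((l : ℕ) + 1) (by omega) (by omega)]
      rw [show NNf N nu N (l : ℕ) = nu (Fin.last N) l from
        by (unfold NNf; rw [dif_pos ⟨by omega, l.isLt⟩] <;> rfl)]
      rfl
    rw [Finset.sum_congr rfl fun l _ => hper l,
      Fin.sum_univ_eq_sum_range (fun t => NNf N nu N t * QZf Z t N) (N + 1),
      Finset.sum_range_succ]
    have hzz : NNf N nu N N * QZf Z N N = 0 := by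
      unfold QZf
      rw [sub_self, inner_zero_right, mul_zero]
    rw [hzz, add_zero]
  rw [hP1, hP2]
  have hcomm : ∑ i : Fin (N + 1), ∑ j : Fin (N + 1), nu i j * QZf Z (i : ℕ) (j : ℕ)
      = ∑ j : Fin (N + 1), ∑ i : Fin (N + 1), nu i j * QZf Z (i : ℕ) (j : ℕ) :=
    Finset.sum_comm
  rw [hcomm]
  have hcol : ∀ c : Fin (N + 1), ∑ i : Fin (N + 1), nu i c * QZf Z (i : ℕ) (c : ℕ)
      = (if h : 1 ≤ (c : ℕ) ∧ (c : ℕ) < N + 1 then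
            NNf N nu ((c : ℕ) - 1) (c : ℕ) * QZf Z ((c : ℕ) - 1) (c : ℕ) else 0)
        + (if h : (c : ℕ) < N then
            NNf N nu ((c : ℕ) + 1) (c : ℕ) * QZf Z ((c : ℕ) + 1) (c : ℕ) else 0)
        + (if h : (c : ℕ) + 2 ≤ N then NNf N nu N (c : ℕ) * QZf Z N (c : ℕ) else 0) := by
    intro c
    rw [colsum hsp c (fun i => QZf Z (i : ℕ) (c : ℕ))]
    congr 1
    · congr 1
      · by_cases h1 : 1 ≤ (c : ℕ)
        · rw [dif_pos h1, dif_pos (show 1 ≤ (c : ℕ) ∧ (c : ℕ) < N + 1 from ⟨h1, c.isLt⟩),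
            show NNf N nu ((c : ℕ) - 1) (c : ℕ)
                = nu ⟨(c : ℕ) - 1, by have := c.isLt; omega⟩ c from
              by (unfold NNf; rw [dif_pos ⟨by have := c.isLt; omega, c.isLt⟩] <;> rfl)]
        · rw [dif_neg h1, dif_neg (show ¬(1 ≤ (c : ℕ) ∧ (c : ℕ) < N + 1) by omega)]
      · by_cases h2 : (c : ℕ) < N
        · rw [dif_pos h2, dif_pos h2,
            show NNf N nu ((c : ℕ) + 1) (c : ℕ) = nu ⟨(c : ℕ) + 1, by omega⟩ c from
              by unfold NNf; rw [dif_pos ⟨by omega, c.isLt⟩]]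
        · rw [dif_neg h2, dif_neg h2]
    · by_cases h3 : (c : ℕ) + 2 ≤ N
      · rw [dif_pos h3, dif_pos h3,
          show NNf N nu N (c : ℕ) = nu (Fin.last N) c from
            by (unfold NNf; rw [dif_pos ⟨by omega, c.isLt⟩] <;> rfl),
          show ((Fin.last N : Fin (N + 1)) : ℕ) = N from Fin.val_last N]
      · rw [dif_neg h3, dif_neg h3]
  rw [Finset.sum_congr rfl fun c _ => hcol c, Finset.sum_add_distrib, Finset.sum_add_distrib]
  have hR1 : ∑ c : Fin (N + 1),
      (if h : 1 ≤ (c : ℕ) ∧ (c : ℕ) < N + 1 then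
        NNf N nu ((c : ℕ) - 1) (c : ℕ) * QZf Z ((c : ℕ) - 1) (c : ℕ) else 0)
      = ∑ k ∈ Finset.range N, NNf N nu k (k + 1) * QZf Z k (k + 1) := by
    rw [Fin.sum_univ_eq_sum_range
        (fun t => if h : 1 ≤ t ∧ t < N + 1 then NNf N nu (t - 1) t * QZf Z (t - 1) t else 0)
        (N + 1),
      Finset.sum_range_succ']
    rw [dif_neg (by omega), add_zero]
    refine Finset.sum_congr rfl fun k hk => ?_
    have hkN : k < N := Finset.mem_range.mp hk
    rw [dif_pos (show 1 ≤ k + 1 ∧ k + 1 < N + 1 by omega)]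
    rfl
  have hR2 : ∑ c : Fin (N + 1),
      (if h : (c : ℕ) < N then
        NNf N nu ((c : ℕ) + 1) (c : ℕ) * QZf Z ((c : ℕ) + 1) (c : ℕ) else 0)
      = ∑ k ∈ Finset.range N, NNf N nu (k + 1) k * QZf Z (k + 1) k := by
    rw [Fin.sum_univ_eq_sum_range
        (fun t => if h : t < N then NNf N nu (t + 1) t * QZf Z (t + 1) t else 0) (N + 1),
      Finset.sum_range_succ]
    rw [dif_neg (by omega), add_zero]
    refine Finset.sum_congr rfl fun k hk => ?_
    rw [dif_pos (Finset.mem_range.mp hk)]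
  have hR3 : ∑ c : Fin (N + 1),
      (if h : (c : ℕ) + 2 ≤ N then NNf N nu N (c : ℕ) * QZf Z N (c : ℕ) else 0)
      = ∑ k ∈ Finset.range N, (if k + 2 ≤ N then NNf N nu N k * QZf Z N k else 0) := by
    rw [Fin.sum_univ_eq_sum_range
        (fun t => if h : t + 2 ≤ N then NNf N nu N t * QZf Z N t else 0) (N + 1),
      Finset.sum_range_succ]
    rw [dif_neg (by omega), add_zero]
    refine Finset.sum_congr rfl fun k hk => ?_
    by_cases h : k + 2 ≤ N
    · rw [dif_pos h, if_pos h]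
    · rw [dif_neg h, if_neg h]
  rw [hR1, hR2, hR3, ← Finset.sum_add_distrib, ← Finset.sum_add_distrib,
    ← Finset.sum_add_distrib]
  refine Finset.sum_congr rfl fun k hk => ?_
  have hkN : k < N := Finset.mem_range.mp hk
  by_cases hk1 : k + 1 = N
  · rw [if_pos hk1, if_neg (by omega), add_zero,
      show N - 1 = k by omega, show NNf N nu N k = NNf N nu (k + 1) k by rw [hk1],
      show NNf N nu k N = NNf N nu k (k + 1) by rw [hk1],
      QZf_symm Z k N, show QZf Z N k = QZf Z (k + 1) k by rw [hk1]]
  · rw [if_neg hk1, if_pos (by omega), QZf_symm Z k N, QZf_symm Z (k + 1) k]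
    ring

end AuxPEP6
section AuxPEP7

open Matrix

variable {d N : ℕ}

private lemma phi_decomp (L μ : ℝ) (hL0 : L ≠ 0) (hLμ : L - μ ≠ 0) (y g : Fin (N + 1) → Vec d)
    (f : Fin (N + 1) → ℝ) (Z : ℕ → Vec d)
    (hZi : ∀ i : Fin (N + 1), Z (i : ℕ) = L • y i - g i) (i j : Fin (N + 1)) :
    Phi L μ y g f i j
      = (f j - f i)
        + ((-(1 / (2 * L)) * ‖g j‖ ^ 2) - (-(1 / (2 * L)) * ‖g i‖ ^ 2))
        + (1 / L) * ⟪g j, Z (i : ℕ) - Z (j : ℕ)⟫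
        + (μ / (2 * L * (L - μ))) * QZf Z (i : ℕ) (j : ℕ) := by
  unfold Phi QZf
  rw [hZi i, hZi j]
  have hz : (L • y i - g i) - (L • y j - g j)
      = L • (y i - y j - (1 / L) • (g i - g j)) := by
    have he : L • ((1 / L) • (g i - g j)) = g i - g j := by
      rw [smul_smul, mul_one_div_cancel hL0, one_smul]
    rw [smul_sub, he, smul_sub]
    abel
  rw [hz, real_inner_smul_right, real_inner_smul_left, real_inner_smul_right]
  simp only [← real_inner_self_eq_norm_sq]
  simp only [inner_sub_left, inner_sub_right, real_inner_smul_left, real_inner_smul_right]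
  rw [real_inner_comm (g i) (g j), real_inner_comm (y i) (g j), real_inner_comm (y j) (g j),
    real_inner_comm (y i) (g i), real_inner_comm (y j) (g i), real_inner_comm (y j) (y i)]
  field_simp
  ring

end AuxPEP7
set_option maxHeartbeats 1000000 in
theorem pep_semidefinite_sufficiency
    (d N : ℕ) (hd : 1 ≤ d) (hN : 1 ≤ N) (L μ : ℝ) (hL : 0 < L) (hμL : μ < L)
    (H : Matrix (Fin N) (Fin N) ℝ) (hH : ∀ i j : Fin N, (i : ℕ) < (j : ℕ) → H i j = 0)
    (τ : ℝ) (hτ : 0 < τ)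
    (nu : Fin (N + 1) → Fin (N + 1) → ℝ)
    (hnn : ∀ i j, 0 ≤ nu i j) (hdiag : ∀ i, nu i i = 0)
    (hsp : ∀ i j : Fin (N + 1),
      ¬ ((j : ℕ) = (i : ℕ) + 1 ∨ (i : ℕ) = (j : ℕ) + 1 ∨
          ((i : ℕ) = N ∧ (j : ℕ) < N)) → nu i j = 0)
    (hG1' : ∀ k : Fin (N + 1), (∑ i : Fin (N + 1), nu i k) - ∑ j : Fin (N + 1), nu k j =
      if k = Fin.last N then 1 else if k = 0 then -1 else 0)
    (hpsd : ((1 / 2 : ℝ) • (Smat L μ τ H nu + (Smat L μ τ H nu)ᵀ)).PosSemidef) :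
    ∀ (y g : Fin (N + 1) → Vec d) (f : Fin (N + 1) → ℝ),
      GenBy L (antiT H) y g →
      (1 / (2 * τ) - 1 / (2 * L)) * ‖g (Fin.last N)‖ ^ 2 - f 0 + f (Fin.last N) ≤
        ∑ i : Fin (N + 1), ∑ j : Fin (N + 1), nu i j * Phi L μ y g f i j := by
  intro y g f hgen
  have hL0 : L ≠ 0 := ne_of_gt hL
  have hLμ : L - μ ≠ 0 := by
    have : 0 < L - μ := by linarith
    exact ne_of_gt this
  set Z : ℕ → Vec d := fun t =>
    if h : t ≤ N then L • y ⟨t, by omega⟩ - g ⟨t, by omega⟩ else 0 with hZdef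
  set vv : Fin (N + 1) → Vec d := fun a =>
    if (a : ℕ) = 0 then g 0 else Z ((a : ℕ) - 1) - Z (a : ℕ) with hvvdef
  have hZn : ∀ (t : ℕ) (h : t ≤ N), Z t = L • y ⟨t, by omega⟩ - g ⟨t, by omega⟩ := by
    intro t h
    simp only [hZdef]
    rw [dif_pos h]
  have hZi : ∀ i : Fin (N + 1), Z (i : ℕ) = L • y i - g i := by
    intro i
    rw [hZn (i : ℕ) (by have := i.isLt; omega)]
  have hvv1 : ∀ a : Fin (N + 1), 1 ≤ (a : ℕ) → vv a = Z ((a : ℕ) - 1) - Z (a : ℕ) := by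
    intro a ha
    simp only [hvvdef]
    rw [if_neg (by omega)]
  have hvmul : ∀ a : Fin (N + 1), vv a = ∑ b, Htilde H b.rev a.rev • g b := by
    intro a
    rw [v_eq hL0 hgen a]
    by_cases h0 : (a : ℕ) = 0
    · simp only [hvvdef]
      rw [if_pos h0, if_pos h0]
    · simp only [hvvdef]
      rw [if_neg h0, if_neg h0, hZn ((a : ℕ) - 1) (by have := a.isLt; omega),
        hZn (a : ℕ) (by have := a.isLt; omega)]
  have hcontr : ∀ c, ∑ b, antiT ((Htilde H)⁻¹) c b • vv b = g c := fun c =>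
    contraction hvmul c
  -- the Gram quantity
  have hQ : 0 ≤ ∑ a, ∑ b, Smat L μ τ H nu a b * ⟪vv a, vv b⟫ :=
    gram_nonneg _ hpsd vv
  -- expand the Gram quantity
  have hSm : ∑ a, ∑ b, Smat L μ τ H nu a b * ⟪vv a, vv b⟫
      = (∑ c : Fin (N + 1), ∑ a : Fin (N + 1), matA nu c a * ⟪g c, vv a⟫)
        + ((μ / L) / (2 * (1 - μ / L)))
            * (∑ a : Fin (N + 1), ∑ b : Fin (N + 1), matB nu a b * ⟪vv a, vv b⟫)
        + (1 / 2) * ‖g 0‖ ^ 2 - (L / (2 * τ)) * ‖g (Fin.last N)‖ ^ 2 := by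
    have hpt : ∀ a b : Fin (N + 1), Smat L μ τ H nu a b * ⟪vv a, vv b⟫
        = ((matA nu)ᵀ * antiT ((Htilde H)⁻¹)) a b * ⟪vv a, vv b⟫
          + ((μ / L) / (2 * (1 - μ / L))) * (matB nu a b * ⟪vv a, vv b⟫)
          + (1 / 2) * ((antiT ((Htilde H)⁻¹) 0 a * antiT ((Htilde H)⁻¹) 0 b) * ⟪vv a, vv b⟫)
          - (L / (2 * τ)) * ((antiT ((Htilde H)⁻¹) (Fin.last N) a
              * antiT ((Htilde H)⁻¹) (Fin.last N) b) * ⟪vv a, vv b⟫) := by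
      intro a b
      simp only [Smat, Matrix.add_apply, Matrix.sub_apply, Matrix.smul_apply,
        Matrix.vecMulVec_apply, smul_eq_mul]
      ring
    rw [Finset.sum_congr rfl fun a _ => Finset.sum_congr rfl fun b _ => hpt a b]
    have hsplit : ∀ a : Fin (N + 1), ∑ b : Fin (N + 1),
        (((matA nu)ᵀ * antiT ((Htilde H)⁻¹)) a b * ⟪vv a, vv b⟫
          + ((μ / L) / (2 * (1 - μ / L))) * (matB nu a b * ⟪vv a, vv b⟫)
          + (1 / 2) * ((antiT ((Htilde H)⁻¹) 0 a * antiT ((Htilde H)⁻¹) 0 b) * ⟪vv a, vv b⟫)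
          - (L / (2 * τ)) * ((antiT ((Htilde H)⁻¹) (Fin.last N) a
              * antiT ((Htilde H)⁻¹) (Fin.last N) b) * ⟪vv a, vv b⟫))
        = (∑ b : Fin (N + 1), ((matA nu)ᵀ * antiT ((Htilde H)⁻¹)) a b * ⟪vv a, vv b⟫)
          + ((μ / L) / (2 * (1 - μ / L))) * ∑ b : Fin (N + 1), matB nu a b * ⟪vv a, vv b⟫
          + (1 / 2) * ∑ b : Fin (N + 1),
              (antiT ((Htilde H)⁻¹) 0 a * antiT ((Htilde H)⁻¹) 0 b) * ⟪vv a, vv b⟫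
          - (L / (2 * τ)) * ∑ b : Fin (N + 1), (antiT ((Htilde H)⁻¹) (Fin.last N) a
              * antiT ((Htilde H)⁻¹) (Fin.last N) b) * ⟪vv a, vv b⟫ := by
      intro a
      rw [Finset.sum_sub_distrib, Finset.sum_add_distrib, Finset.sum_add_distrib,
        ← Finset.mul_sum, ← Finset.mul_sum, ← Finset.mul_sum]
    rw [Finset.sum_congr rfl fun a _ => hsplit a]
    rw [Finset.sum_sub_distrib, Finset.sum_add_distrib, Finset.sum_add_distrib,
      ← Finset.mul_sum, ← Finset.mul_sum, ← Finset.mul_sum]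
    have hbsum : ∀ (c : Fin (N + 1)) (a : Fin (N + 1)),
        ∑ b : Fin (N + 1), antiT ((Htilde H)⁻¹) c b * ⟪vv a, vv b⟫ = ⟪vv a, g c⟫ := by
      intro c a
      rw [← hcontr c, inner_sum]
      exact Finset.sum_congr rfl fun b _ => (real_inner_smul_right _ _ _).symm
    have hpiece1 : ∑ a : Fin (N + 1), ∑ b : Fin (N + 1),
        ((matA nu)ᵀ * antiT ((Htilde H)⁻¹)) a b * ⟪vv a, vv b⟫
        = ∑ c : Fin (N + 1), ∑ a : Fin (N + 1), matA nu c a * ⟪g c, vv a⟫ := by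
      have h1 : ∀ a b : Fin (N + 1), ((matA nu)ᵀ * antiT ((Htilde H)⁻¹)) a b * ⟪vv a, vv b⟫
          = ∑ c : Fin (N + 1), matA nu c a * (antiT ((Htilde H)⁻¹) c b * ⟪vv a, vv b⟫) := by
        intro a b
        rw [Matrix.mul_apply, Finset.sum_mul]
        exact Finset.sum_congr rfl fun c _ => by rw [Matrix.transpose_apply]; ring
      rw [Finset.sum_congr rfl fun a _ => Finset.sum_congr rfl fun b _ => h1 a b]
      rw [Finset.sum_congr rfl fun a (_ : a ∈ Finset.univ) =>
        (Finset.sum_comm (s := Finset.univ) (t := Finset.univ)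
          (f := fun (b : Fin (N + 1)) (c : Fin (N + 1)) =>
            matA nu c a * (antiT ((Htilde H)⁻¹) c b * ⟪vv a, vv b⟫)))]
      rw [Finset.sum_comm]
      refine Finset.sum_congr rfl fun c _ => Finset.sum_congr rfl fun a _ => ?_
      rw [← Finset.mul_sum, hbsum c a, real_inner_comm]
    have hpiece3 : ∀ c : Fin (N + 1), ∑ a : Fin (N + 1), ∑ b : Fin (N + 1),
        (antiT ((Htilde H)⁻¹) c a * antiT ((Htilde H)⁻¹) c b) * ⟪vv a, vv b⟫
        = ‖g c‖ ^ 2 := by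
      intro c
      have h2 : ∀ a : Fin (N + 1), ∑ b : Fin (N + 1),
          (antiT ((Htilde H)⁻¹) c a * antiT ((Htilde H)⁻¹) c b) * ⟪vv a, vv b⟫
          = antiT ((Htilde H)⁻¹) c a * ⟪vv a, g c⟫ := by
        intro a
        rw [← hbsum c a, Finset.mul_sum]
        exact Finset.sum_congr rfl fun b _ => by ring
      rw [Finset.sum_congr rfl fun a _ => h2 a]
      have h3 : ∑ a : Fin (N + 1), antiT ((Htilde H)⁻¹) c a * ⟪vv a, g c⟫ = ⟪g c, g c⟫ := by
        rw [← hcontr c, sum_inner]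
        exact Finset.sum_congr rfl fun a _ => by
          rw [real_inner_smul_left]
      rw [h3, real_inner_self_eq_norm_sq]
    rw [hpiece1, hpiece3 0, hpiece3 (Fin.last N)]
  -- expand the Phi sum
  have hphisum : ∑ i : Fin (N + 1), ∑ j : Fin (N + 1), nu i j * Phi L μ y g f i j
      = (f (Fin.last N) - f 0)
        + ((-(1 / (2 * L)) * ‖g (Fin.last N)‖ ^ 2) - (-(1 / (2 * L)) * ‖g 0‖ ^ 2))
        + (1 / L) * (∑ c : Fin (N + 1), ∑ a : Fin (N + 1), matA nu c a * ⟪g c, vv a⟫)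
        + (μ / (2 * L * (L - μ)))
            * (∑ a : Fin (N + 1), ∑ b : Fin (N + 1), matB nu a b * ⟪vv a, vv b⟫) := by
    have hpt : ∀ i j : Fin (N + 1), nu i j * Phi L μ y g f i j
        = nu i j * (f j - f i)
          + nu i j * ((fun k => -(1 / (2 * L)) * ‖g k‖ ^ 2) j
              - (fun k => -(1 / (2 * L)) * ‖g k‖ ^ 2) i)
          + (1 / L) * (nu i j * ⟪g j, Z (i : ℕ) - Z (j : ℕ)⟫)
          + (μ / (2 * L * (L - μ))) * (nu i j * QZf Z (i : ℕ) (j : ℕ)) := by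
      intro i j
      rw [phi_decomp L μ hL0 hLμ y g f Z hZi i j]
      ring
    rw [Finset.sum_congr rfl fun i _ => Finset.sum_congr rfl fun j _ => hpt i j]
    have hsplit2 : ∀ i : Fin (N + 1), ∑ j : Fin (N + 1),
        (nu i j * (f j - f i)
          + nu i j * ((fun k => -(1 / (2 * L)) * ‖g k‖ ^ 2) j
              - (fun k => -(1 / (2 * L)) * ‖g k‖ ^ 2) i)
          + (1 / L) * (nu i j * ⟪g j, Z (i : ℕ) - Z (j : ℕ)⟫)
          + (μ / (2 * L * (L - μ))) * (nu i j * QZf Z (i : ℕ) (j : ℕ)))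
        = (∑ j : Fin (N + 1), nu i j * (f j - f i))
          + (∑ j : Fin (N + 1), nu i j * ((fun k => -(1 / (2 * L)) * ‖g k‖ ^ 2) j
              - (fun k => -(1 / (2 * L)) * ‖g k‖ ^ 2) i))
          + (1 / L) * ∑ j : Fin (N + 1), nu i j * ⟪g j, Z (i : ℕ) - Z (j : ℕ)⟫
          + (μ / (2 * L * (L - μ))) * ∑ j : Fin (N + 1), nu i j * QZf Z (i : ℕ) (j : ℕ) := by
      intro i
      rw [Finset.sum_add_distrib, Finset.sum_add_distrib, Finset.sum_add_distrib,
        ← Finset.mul_sum, ← Finset.mul_sum]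
    rw [Finset.sum_congr rfl fun i _ => hsplit2 i]
    rw [Finset.sum_add_distrib, Finset.sum_add_distrib, Finset.sum_add_distrib,
      ← Finset.mul_sum, ← Finset.mul_sum]
    rw [g1tel hN hG1' f, g1tel hN hG1' (fun k => -(1 / (2 * L)) * ‖g k‖ ^ 2)]
    rw [← sumA_eq hsp hN Z g vv hvv1, ← sumB_eq hsp hN Z vv hvv1]
  -- final arithmetic
  have h1m : 1 - μ / L ≠ 0 := by
    have : μ / L < 1 := (div_lt_one hL).mpr hμL
    intro hh
    rw [sub_eq_zero] at hh
    exact absurd hh.symm (ne_of_lt this)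
  have hτ0 : τ ≠ 0 := ne_of_gt hτ
  have hkey : ∑ i : Fin (N + 1), ∑ j : Fin (N + 1), nu i j * Phi L μ y g f i j
      = ((1 / (2 * τ) - 1 / (2 * L)) * ‖g (Fin.last N)‖ ^ 2 - f 0 + f (Fin.last N))
        + (1 / L) * (∑ a, ∑ b, Smat L μ τ H nu a b * ⟪vv a, vv b⟫) := by
    rw [hphisum, hSm]
    field_simp
    ring
  rw [hkey]
  have : 0 ≤ (1 / L) * (∑ a, ∑ b, Smat L μ τ H nu a b * ⟪vv a, vv b⟫) :=
    mul_nonneg (by positivity) hQ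
  linarith
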